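/- Let n and r be positive integers, let w ∈ S(n,r), and let k ∈ {1,…,n−1} be a double descent of w. Then the set {ℓ : 1 ≤ ℓ < k and w_{ℓ−1} < w_k} is nonempty, and for its largest element ℓ one has w_ℓ ≥ w_k. Moreover, if w_ℓ > w_k, then the word w' = (w'_0, w'_1, …, w'_n) defined by w'_ℓ = w_k, w'_{i+1} = w_i for ℓ ≤ i < k, and w'_i = w_i for all other indices i, belongs to S(n,r) and satisfies asc(w') = asc(w) + 1. -/
import Mathlib


open scoped Classical

noncomputable section

/-- Value of a word `w : Fin (n+1) → ℕ` at a natural index (junk value `0` out of range). -/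
def wv {n : ℕ} (w : Fin (n + 1) → ℕ) (k : ℕ) : ℕ :=
  if h : k < n + 1 then w ⟨k, h⟩ else 0

/-- The number of ascents of a word `w = (w_0, w_1, …, w_n)`, i.e. the number of indices
`i ∈ {0,…,n-1}` with `w_i < w_{i+1}`. -/
def asc {n : ℕ} (w : Fin (n + 1) → ℕ) : ℕ :=
  ((Finset.range n).filter fun i => wv w i < wv w (i + 1)).card

/-- The set `S(n,r)` of Smirnov words `w = (w_0, …, w_n) ∈ {0,…,r-1}^{n+1}` with
`w_0 = w_n = 0` and no two consecutive entries equal. -/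
def smirnov (n r : ℕ) : Finset (Fin (n + 1) → ℕ) :=
  (Fintype.piFinset fun _ => Finset.range r).filter fun w =>
    wv w 0 = 0 ∧ wv w n = 0 ∧ ∀ i < n, wv w i ≠ wv w (i + 1)

/-- `k ∈ {1,…,n-1}` is a double ascent of `w` if `w_{k-1} < w_k < w_{k+1}`. -/
def doubleAscent {n : ℕ} (w : Fin (n + 1) → ℕ) (k : ℕ) : Prop :=
  1 ≤ k ∧ k < n ∧ wv w (k - 1) < wv w k ∧ wv w k < wv w (k + 1)

/-- `k ∈ {1,…,n-1}` is a double descent of `w` if `w_{k-1} > w_k > w_{k+1}`. -/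
def doubleDescent {n : ℕ} (w : Fin (n + 1) → ℕ) (k : ℕ) : Prop :=
  1 ≤ k ∧ k < n ∧ wv w k < wv w (k - 1) ∧ wv w (k + 1) < wv w k

/-- `w` has the matching property: for every double ascent `k` of `w` there is a double
descent `ℓ > k` with `w_k = w_ℓ` and `w_k ≤ w_j` for all `k < j < ℓ`. -/
def hasMatching {n : ℕ} (w : Fin (n + 1) → ℕ) : Prop :=
  ∀ k, doubleAscent w k →
    ∃ l, k < l ∧ doubleDescent w l ∧ wv w k = wv w l ∧
      ∀ j, k < j → j < l → wv w k ≤ wv w j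

/-- The set of indices `ℓ` with `k < ℓ < n` and `w_{ℓ+1} < w_k`. -/
def rightSet {n : ℕ} (w : Fin (n + 1) → ℕ) (k : ℕ) : Set ℕ :=
  {l | k < l ∧ l < n ∧ wv w (l + 1) < wv w k}

/-- The set of indices `ℓ` with `1 ≤ ℓ < k` and `w_{ℓ-1} < w_k`. -/
def leftSet {n : ℕ} (w : Fin (n + 1) → ℕ) (k : ℕ) : Set ℕ :=
  {l | 1 ≤ l ∧ l < k ∧ wv w (l - 1) < wv w k}

/-- The word `w'` obtained from `w` by deleting `w_k` and inserting it between
`w_{ℓ-1}` and `w_ℓ` (for `ℓ < k`): `w'_ℓ = w_k`, `w'_{i+1} = w_i` for `ℓ ≤ i < k`,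
and `w'_i = w_i` for all other indices. -/
def leftMove {n : ℕ} (w : Fin (n + 1) → ℕ) (k l : ℕ) : Fin (n + 1) → ℕ :=
  fun i => if (i : ℕ) = l then wv w k
    else if l < (i : ℕ) ∧ (i : ℕ) ≤ k then wv w ((i : ℕ) - 1) else w i

/-- The word `w''` obtained from `w` by deleting `w_k` and inserting it between
`w_ℓ` and `w_{ℓ+1}` (for `k < ℓ`): `w''_ℓ = w_k`, `w''_{i-1} = w_i` for `k < i ≤ ℓ`,
and `w''_i = w_i` for all other indices. -/
def rightMove {n : ℕ} (w : Fin (n + 1) → ℕ) (k l : ℕ) : Fin (n + 1) → ℕ :=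
  fun i => if (i : ℕ) = l then wv w k
    else if k ≤ (i : ℕ) ∧ (i : ℕ) < l then wv w ((i : ℕ) + 1) else w i

lemma wv_eq {n : ℕ} (w : Fin (n + 1) → ℕ) (i : ℕ) (hi : i < n + 1) :
    wv w i = w ⟨i, hi⟩ := dif_pos hi

lemma wv_leftMove {n : ℕ} (w : Fin (n + 1) → ℕ) (k l i : ℕ) (hi : i < n + 1) :
    wv (leftMove w k l) i
      = if i = l then wv w k else if l < i ∧ i ≤ k then wv w (i - 1) else wv w i := by
  rw [wv_eq _ i hi]
  show (if i = l then wv w k else if l < i ∧ i ≤ k then wv w (i - 1) else w ⟨i, hi⟩) = _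
  split_ifs with h1 h2
  · rfl
  · rfl
  · exact (wv_eq w i hi).symm

/-- For `w ∈ S(n,r)` and a double descent `k` of `w`: the set of indices `ℓ` with
`1 ≤ ℓ < k` and `w_{ℓ-1} < w_k` is nonempty; its largest element `ℓ` satisfies
`w_ℓ ≥ w_k`; and if `w_ℓ > w_k`, then the left match `w'` (obtained by deleting `w_k`
and inserting it between `w_{ℓ-1}` and `w_ℓ`) belongs to `S(n,r)` and has exactly one
more ascent than `w`. -/
theorem leftMatch_mem_and_asc (n r : ℕ) (hn : 0 < n) (hr : 0 < r)
    (w : Fin (n + 1) → ℕ) (hw : w ∈ smirnov n r) (k : ℕ) (hk : doubleDescent w k) :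
    (leftSet w k).Nonempty ∧
    wv w k ≤ wv w (sSup (leftSet w k)) ∧
    (wv w k < wv w (sSup (leftSet w k)) →
      leftMove w k (sSup (leftSet w k)) ∈ smirnov n r ∧
        asc (leftMove w k (sSup (leftSet w k))) = asc w + 1) := by
  classical
  rw [smirnov, Finset.mem_filter, Fintype.mem_piFinset] at hw
  obtain ⟨hwpi, h0, hnn, hne⟩ := hw
  obtain ⟨hk1, hkn, hd1, hd2⟩ := hk
  have hwvlt : ∀ i : ℕ, i < n + 1 → wv w i < r := fun i hi => by
    rw [wv_eq w i hi]; simpa using hwpi ⟨i, hi⟩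
  have hk0 : 0 < wv w k := lt_of_le_of_lt (Nat.zero_le _) hd2
  have hk2 : 2 ≤ k := by
    by_contra h
    have hk1' : k = 1 := by omega
    rw [hk1'] at hd1
    rw [show (1 : ℕ) - 1 = 0 from rfl, h0] at hd1
    omega
  have hmem1 : (1 : ℕ) ∈ leftSet w k := by
    refine ⟨le_refl 1, by omega, ?_⟩
    rw [show (1 : ℕ) - 1 = 0 from rfl, h0]; exact hk0
  have hne0 : (leftSet w k).Nonempty := ⟨1, hmem1⟩
  have hbdd : BddAbove (leftSet w k) := ⟨k, fun x hx => le_of_lt hx.2.1⟩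
  set l := sSup (leftSet w k) with hldef
  have hlmem : l ∈ leftSet w k := Nat.sSup_mem hne0 hbdd
  obtain ⟨hl1, hlk, hllt⟩ := hlmem
  have hwl : wv w k ≤ wv w l := by
    by_contra h
    push_neg at h
    rcases eq_or_lt_of_le (show l + 1 ≤ k by omega) with heq | hlt'
    · have hke : k - 1 = l := by omega
      rw [hke] at hd1; omega
    · have : l + 1 ∈ leftSet w k := ⟨by omega, hlt', by simpa using h⟩
      have := le_csSup hbdd this
      omega
  refine ⟨hne0, hwl, fun hlt => ?_⟩
  have hval : ∀ i : ℕ, i < n + 1 → wv (leftMove w k l) i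
      = if i = l then wv w k else if l < i ∧ i ≤ k then wv w (i - 1) else wv w i :=
    fun i hi => wv_leftMove w k l i hi
  have hadj : ∀ i < n, wv (leftMove w k l) i ≠ wv (leftMove w k l) (i + 1) := by
    intro i hi
    rw [hval i (by omega), hval (i + 1) (by omega)]
    split_ifs with h1 h2 h3 h4 h5 h6 h7
    · omega
    · rw [show i + 1 - 1 = l by omega]
      exact ne_of_lt hlt
    · omega
    · omega
    · have h9 := hne (i - 1) (by omega)
      rw [Nat.sub_add_cancel (by omega : 1 ≤ i)] at h9
      rw [show i + 1 - 1 = i by omega]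
      exact h9
    · rw [show i = k by omega]
      omega
    · rw [show i = l - 1 by omega]
      exact ne_of_lt hllt
    · omega
    · exact hne i hi
  have hmem' : leftMove w k l ∈ smirnov n r := by
    rw [smirnov, Finset.mem_filter, Fintype.mem_piFinset]
    refine ⟨fun i => ?_, ?_, ?_, hadj⟩
    · have : leftMove w k l i = wv (leftMove w k l) (i : ℕ) := by
        rw [wv_eq _ _ i.isLt]
      rw [Finset.mem_range, this, hval _ i.isLt]
      split_ifs with h1 h2
      · exact hwvlt k (by omega)
      · exact hwvlt _ (by omega)
      · exact hwvlt _ i.isLt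
    · rw [hval 0 (by omega), if_neg (show (0:ℕ) ≠ l by omega),
        if_neg (show ¬(l < 0 ∧ 0 ≤ k) by omega)]
      exact h0
    · rw [hval n (by omega), if_neg (show n ≠ l by omega),
        if_neg (show ¬(l < n ∧ n ≤ k) by omega)]
      exact hnn
  refine ⟨hmem', ?_⟩
  have hcard : ∀ v : Fin (n + 1) → ℕ,
      asc v = ∑ i ∈ Finset.range n, (if wv v i < wv v (i + 1) then 1 else 0) := by
    intro v; rw [asc, Finset.card_filter]
  set w' := leftMove w k l with hw'def
  have hG1 : ∀ i ∈ Finset.Ico 0 l,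
      (if wv w' i < wv w' (i + 1) then 1 else 0)
        = (if wv w i < wv w (i + 1) then 1 else 0) := by
    intro i hi
    rw [Finset.mem_Ico] at hi
    rw [hw'def, hval i (by omega), if_neg (show i ≠ l by omega),
      if_neg (show ¬(l < i ∧ i ≤ k) by omega), hval (i + 1) (by omega)]
    by_cases h : i + 1 = l
    · rw [if_pos h, show i = l - 1 by omega, show l - 1 + 1 = l by omega,
        if_pos hllt, if_pos (hllt.trans hlt)]
    · rw [if_neg h, if_neg (show ¬(l < i + 1 ∧ i + 1 ≤ k) by omega)]
  have hG2 : (if wv w' l < wv w' (l + 1) then 1 else 0) = 1 := by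
    rw [hw'def, hval l (by omega), if_pos rfl, hval (l + 1) (by omega),
      if_neg (show l + 1 ≠ l by omega), if_pos (show l < l + 1 ∧ l + 1 ≤ k by omega),
      show l + 1 - 1 = l from rfl, if_pos hlt]
  have hG3 : ∑ i ∈ Finset.Ico (l + 1) k, (if wv w' i < wv w' (i + 1) then 1 else 0)
      = ∑ i ∈ Finset.Ico l (k - 1), (if wv w i < wv w (i + 1) then 1 else 0) := by
    rw [Finset.sum_Ico_eq_sum_range, Finset.sum_Ico_eq_sum_range,
      show k - (l + 1) = k - 1 - l by omega]
    refine Finset.sum_congr rfl fun i hi => ?_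
    rw [Finset.mem_range] at hi
    rw [hw'def, hval (l + 1 + i) (by omega), if_neg (show l + 1 + i ≠ l by omega),
      if_pos (show l < l + 1 + i ∧ l + 1 + i ≤ k by omega),
      hval (l + 1 + i + 1) (by omega), if_neg (show l + 1 + i + 1 ≠ l by omega),
      if_pos (show l < l + 1 + i + 1 ∧ l + 1 + i + 1 ≤ k by omega),
      show l + 1 + i - 1 = l + i by omega, show l + 1 + i + 1 - 1 = l + i + 1 by omega]
  have hG4 : (if wv w' k < wv w' (k + 1) then 1 else 0) = 0 := by
    rw [hw'def, hval k (by omega), if_neg (show k ≠ l by omega),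
      if_pos (show l < k ∧ k ≤ k by omega),
      hval (k + 1) (by omega), if_neg (show k + 1 ≠ l by omega),
      if_neg (show ¬(l < k + 1 ∧ k + 1 ≤ k) by omega)]
    exact if_neg (by omega)
  have hG5 : ∀ i ∈ Finset.Ico (k + 1) n,
      (if wv w' i < wv w' (i + 1) then 1 else 0)
        = (if wv w i < wv w (i + 1) then 1 else 0) := by
    intro i hi
    rw [Finset.mem_Ico] at hi
    rw [hw'def, hval i (by omega), if_neg (show i ≠ l by omega),
      if_neg (show ¬(l < i ∧ i ≤ k) by omega),
      hval (i + 1) (by omega), if_neg (show i + 1 ≠ l by omega),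
      if_neg (show ¬(l < i + 1 ∧ i + 1 ≤ k) by omega)]
  have hF1 : (if wv w (k - 1) < wv w (k - 1 + 1) then 1 else 0) = 0 := by
    rw [show k - 1 + 1 = k by omega]
    exact if_neg (by omega)
  have hF2 : (if wv w k < wv w (k + 1) then 1 else 0) = 0 := if_neg (by omega)
  -- split sums
  have hsplitG : ∑ i ∈ Finset.range n, (if wv w' i < wv w' (i + 1) then 1 else 0)
      = (∑ i ∈ Finset.Ico 0 l, (if wv w' i < wv w' (i + 1) then 1 else 0))
        + (if wv w' l < wv w' (l + 1) then 1 else 0)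
        + (∑ i ∈ Finset.Ico (l + 1) k, (if wv w' i < wv w' (i + 1) then 1 else 0))
        + (if wv w' k < wv w' (k + 1) then 1 else 0)
        + (∑ i ∈ Finset.Ico (k + 1) n, (if wv w' i < wv w' (i + 1) then 1 else 0)) := by
    rw [Finset.range_eq_Ico,
      ← Finset.sum_Ico_consecutive _ (Nat.zero_le l) (show l ≤ n by omega),
      ← Finset.sum_Ico_consecutive _ (show l ≤ l + 1 by omega) (show l + 1 ≤ n by omega),
      ← Finset.sum_Ico_consecutive _ (show l + 1 ≤ k by omega) (show k ≤ n by omega),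
      ← Finset.sum_Ico_consecutive _ (show k ≤ k + 1 by omega) (show k + 1 ≤ n by omega),
      show Finset.Ico l (l + 1) = {l} from Nat.Ico_succ_singleton _,
      show Finset.Ico k (k + 1) = {k} from Nat.Ico_succ_singleton _,
      Finset.sum_singleton, Finset.sum_singleton]
    ring
  have hsplitF : ∑ i ∈ Finset.range n, (if wv w i < wv w (i + 1) then 1 else 0)
      = (∑ i ∈ Finset.Ico 0 l, (if wv w i < wv w (i + 1) then 1 else 0))
        + (∑ i ∈ Finset.Ico l (k - 1), (if wv w i < wv w (i + 1) then 1 else 0))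
        + (if wv w (k - 1) < wv w (k - 1 + 1) then 1 else 0)
        + (if wv w k < wv w (k + 1) then 1 else 0)
        + (∑ i ∈ Finset.Ico (k + 1) n, (if wv w i < wv w (i + 1) then 1 else 0)) := by
    rw [Finset.range_eq_Ico,
      ← Finset.sum_Ico_consecutive _ (Nat.zero_le l) (show l ≤ n by omega),
      ← Finset.sum_Ico_consecutive _ (show l ≤ k - 1 by omega) (show k - 1 ≤ n by omega),
      ← Finset.sum_Ico_consecutive _ (show k - 1 ≤ k by omega) (show k ≤ n by omega),
      ← Finset.sum_Ico_consecutive _ (show k ≤ k + 1 by omega) (show k + 1 ≤ n by omega),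
      show Finset.Ico (k - 1) k = {k - 1} by rw [show k = k - 1 + 1 by omega]; exact Nat.Ico_succ_singleton _,
      show Finset.Ico k (k + 1) = {k} from Nat.Ico_succ_singleton _,
      Finset.sum_singleton, Finset.sum_singleton]
    ring
  rw [hcard, hcard, hsplitG, hsplitF, Finset.sum_congr rfl hG1, hG2, hG3, hG4,
    Finset.sum_congr rfl hG5, hF1, hF2]
  ring
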